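/- Let r ≥ 3 and 1 ≤ k ≤ r, and let K be a complete r-uniform r-partite hypergraph with a spanning k-coloring of its edges. Then the vertex set of K is covered by a single monochromatic component. -/

import Mathlib

open Classical

variable {V : Type*}

/-- `e` is an edge of the complete `r`-uniform `r`-partite hypergraph with
partition `part`: it meets every class in exactly one vertex. -/
def IsPartiteEdge {r : ℕ} (part : V → Fin r) (e : Finset V) : Prop :=
  ∀ i : Fin r, (e.filter fun v => part v = i).card = 1

/-- `e` is an edge of the complete `r`-uniform `(r,ℓ)`-partite hypergraph:
an `r`-set meeting every class in at most `ℓ` vertices. -/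
def IsRLEdge {r : ℕ} (part : V → Fin r) (ℓ : ℕ) (e : Finset V) : Prop :=
  e.card = r ∧ ∀ i : Fin r, (e.filter fun v => part v = i).card ≤ ℓ

/-- An edge is friendly if it meets at most one class in exactly `ℓ` vertices. -/
def Friendly {r : ℕ} (part : V → Fin r) (ℓ : ℕ) (e : Finset V) : Prop :=
  (Finset.univ.filter fun i : Fin r => (e.filter fun v => part v = i).card = ℓ).card ≤ 1

/-- `u` and `v` lie in the same monochromatic component of color `c` of the
hypergraph with edge predicate `E` and edge coloring `χ`. -/
def MonoConn {k : ℕ} (E : Finset V → Prop) (χ : Finset V → Fin k) (c : Fin k)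
    (u v : V) : Prop :=
  Relation.ReflTransGen (fun a b => ∃ e : Finset V, E e ∧ χ e = c ∧ a ∈ e ∧ b ∈ e) u v

/-- The coloring `χ` is spanning: every vertex is incident with an edge of every color. -/
def Spanning {k : ℕ} (E : Finset V → Prop) (χ : Finset V → Fin k) : Prop :=
  ∀ v : V, ∀ c : Fin k, ∃ e : Finset V, E e ∧ χ e = c ∧ v ∈ e

/-- The vertex set can be covered by at most `m` monochromatic components. -/
def CoversBy {k : ℕ} (E : Finset V → Prop) (χ : Finset V → Fin k) (m : ℕ) : Prop :=
  ∃ f : Fin m → Fin k × V, ∀ v : V, ∃ i : Fin m, MonoConn E χ (f i).1 (f i).2 v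

/-- Hamming distance of the component vectors of two vertices: the number of
colors `c` for which they lie in different monochromatic components of color `c`. -/
noncomputable def HamDist {k : ℕ} (E : Finset V → Prop) (χ : Finset V → Fin k)
    (v w : V) : ℕ :=
  (Finset.univ.filter fun c : Fin k => ¬ MonoConn E χ c v w).card

/-- Edge builder: a transversal choice of one vertex per class gives a partite edge. -/
lemma mkEdge {r : ℕ} (part : V → Fin r) (w : Fin r → V) (hw : ∀ i, part (w i) = i) :
    IsPartiteEdge part (Finset.image w Finset.univ) := by
  intro i
  have h : (Finset.image w Finset.univ).filter (fun v => part v = i) = {w i} := by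
    ext v
    simp only [Finset.mem_filter, Finset.mem_image, Finset.mem_univ, true_and,
      Finset.mem_singleton]
    constructor
    · rintro ⟨⟨j, rfl⟩, hp⟩
      rw [hw j] at hp; subst hp; rfl
    · rintro rfl
      exact ⟨⟨i, rfl⟩, hw i⟩
  rw [h, Finset.card_singleton]

theorem stmt_1 {r k : ℕ} [Fintype V] (hr : 3 ≤ r) (hk1 : 1 ≤ k) (hkr : k ≤ r)
    (part : V → Fin r) (hne : ∀ i : Fin r, ∃ v, part v = i)
    (χ : Finset V → Fin k) (hs : Spanning (IsPartiteEdge part) χ) :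
    ∃ (c : Fin k) (w : V), ∀ v : V, MonoConn (IsPartiteEdge part) χ c w v := by
  by_contra hng
  push_neg at hng
  -- hng : ∀ c w, ∃ v, ¬ MonoConn (IsPartiteEdge part) χ c w v
  have hsymm : ∀ (c : Fin k) (u v : V), MonoConn (IsPartiteEdge part) χ c u v →
      MonoConn (IsPartiteEdge part) χ c v u := by
    intro c u v h
    refine Std.Symm.symm (self := @Relation.ReflTransGen.stdSymm _ _ ⟨?_⟩) _ _ h
    rintro a b ⟨e, h1, h2, h3, h4⟩
    exact ⟨e, h1, h2, h4, h3⟩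
  -- every color component is transversal
  have F1 : ∀ (u : V) (c : Fin k) (j : Fin r),
      ∃ z, part z = j ∧ MonoConn (IsPartiteEdge part) χ c u z := by
    intro u c j
    obtain ⟨e, he, hc, hu⟩ := hs u c
    have h2 : (e.filter fun v => part v = j).Nonempty := by
      rw [← Finset.card_pos, he j]; norm_num
    obtain ⟨z, hz⟩ := h2
    rw [Finset.mem_filter] at hz
    exact ⟨z, hz.2, Relation.ReflTransGen.single ⟨e, he, hc, hu, hz.1⟩⟩
  -- complements of components are transversal as well
  have F2 : ∀ (u : V) (c : Fin k) (j : Fin r),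
      ∃ z, part z = j ∧ ¬ MonoConn (IsPartiteEdge part) χ c u z := by
    intro u c j
    obtain ⟨y, hy⟩ := hng c u
    obtain ⟨z, hz1, hz2⟩ := F1 y c j
    exact ⟨z, hz1, fun h => hy (h.trans (hsymm _ _ _ hz2))⟩
  choose zf hzp hznc using F2
  rcases eq_or_lt_of_le hk1 with hk | hk
  · -- case k = 1
    obtain ⟨u, -⟩ := hne ⟨0, by omega⟩
    have hnontriv : Nontrivial (Fin r) :=
      ⟨⟨0, by omega⟩, ⟨1, by omega⟩, by simp [Fin.ext_iff]⟩
    obtain ⟨j, hj⟩ := exists_ne (part u)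
    set c0 : Fin k := ⟨0, by omega⟩ with hc0
    set z := zf u c0 j with hzdef
    set wf : Fin r → V := fun i =>
      if i = part u then u else if i = j then z else (hne i).choose with hwfdef
    have hwf : ∀ i, part (wf i) = i := by
      intro i
      by_cases h1 : i = part u
      · simp [hwfdef, h1]
      · by_cases h2 : i = j
        · simp [hwfdef, h1, h2, hj, hzp, hzdef]
        · simp [hwfdef, h1, h2, (hne i).choose_spec]
    have he : IsPartiteEdge part (Finset.image wf Finset.univ) := mkEdge part wf hwf
    have humem : u ∈ Finset.image wf Finset.univ :=
      Finset.mem_image.mpr ⟨part u, Finset.mem_univ _, by simp [hwfdef]⟩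
    have hzmem : z ∈ Finset.image wf Finset.univ :=
      Finset.mem_image.mpr ⟨j, Finset.mem_univ _, by simp [hwfdef, hj]⟩
    have hχ : χ (Finset.image wf Finset.univ) = c0 :=
      Fin.ext (by have := (χ (Finset.image wf Finset.univ)).isLt; omega)
    exact hznc u c0 j (Relation.ReflTransGen.single ⟨_, he, hχ, humem, hzmem⟩)
  · -- case 2 ≤ k
    set c0 : Fin k := ⟨0, by omega⟩ with hc0
    set c1 : Fin k := ⟨1, by omega⟩ with hc1
    have hc0c1 : c0 ≠ c1 := by simp [hc0, hc1, Fin.ext_iff]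
    obtain ⟨v0, -⟩ := hne ⟨0, by omega⟩
    obtain ⟨j, j', hjv, hj'v, hjj'⟩ :
        ∃ j j' : Fin r, j ≠ part v0 ∧ j' ≠ part v0 ∧ j ≠ j' := by
      by_cases h0 : part v0 = ⟨0, by omega⟩
      · exact ⟨⟨1, by omega⟩, ⟨2, by omega⟩, by simp [h0, Fin.ext_iff],
          by simp [h0, Fin.ext_iff], by simp [Fin.ext_iff]⟩
      · by_cases h1 : part v0 = ⟨1, by omega⟩
        · exact ⟨⟨0, by omega⟩, ⟨2, by omega⟩, by simp [h1, Fin.ext_iff],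
            by simp [h1, Fin.ext_iff], by simp [Fin.ext_iff]⟩
        · exact ⟨⟨0, by omega⟩, ⟨1, by omega⟩, fun h => h0 h.symm,
            fun h => h1 h.symm, by simp [Fin.ext_iff]⟩
    -- Claim: there are two vertices in distinct classes disconnected in two colors
    have claim : ∃ u w, ∃ c c' : Fin k, part u ≠ part w ∧ c ≠ c' ∧
        ¬ MonoConn (IsPartiteEdge part) χ c u w ∧
        ¬ MonoConn (IsPartiteEdge part) χ c' u w := by
      by_contra hcl
      push_neg at hcl
      have hz_all : ∀ d, d ≠ c0 → MonoConn (IsPartiteEdge part) χ d v0 (zf v0 c0 j) :=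
        fun d hd => hcl v0 (zf v0 c0 j) c0 d
          (by rw [hzp]; exact Ne.symm hjv) (Ne.symm hd) (hznc v0 c0 j)
      have hz'_all : ∀ d, d ≠ c1 → MonoConn (IsPartiteEdge part) χ d v0 (zf v0 c1 j') :=
        fun d hd => hcl v0 (zf v0 c1 j') c1 d
          (by rw [hzp]; exact Ne.symm hj'v) (Ne.symm hd) (hznc v0 c1 j')
      have h1 : ¬ MonoConn (IsPartiteEdge part) χ c0 (zf v0 c0 j) (zf v0 c1 j') := by
        intro h
        exact hznc v0 c0 j ((hz'_all c0 hc0c1).trans (hsymm _ _ _ h))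
      have h2 := hcl (zf v0 c0 j) (zf v0 c1 j') c0 c1
        (by rw [hzp, hzp]; exact hjj') hc0c1 h1
      exact hznc v0 c1 j' ((hz_all c1 (Ne.symm hc0c1)).trans h2)
    obtain ⟨u, w, c, c', hpuw, hcc', hnc, hnc'⟩ := claim
    -- build an injective color→class map sending c ↦ part u, c' ↦ part w
    have hinj0 : Function.Injective (Fin.castLE hkr) := Fin.castLE_injective hkr
    have hxy : Fin.castLE hkr c ≠ Fin.castLE hkr c' := fun h => hcc' (hinj0 h)
    set s1 := Equiv.swap (Fin.castLE hkr c) (part u) with hs1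
    set s2 := Equiv.swap (s1 (Fin.castLE hkr c')) (part w) with hs2
    set ρ : Fin k → Fin r := fun d => s2 (s1 (Fin.castLE hkr d)) with hρ
    have hρinj : Function.Injective ρ :=
      fun d d' h => hinj0 (s1.injective (s2.injective h))
    have hρc : ρ c = part u := by
      have h1 : s1 (Fin.castLE hkr c) = part u := Equiv.swap_apply_left _ _
      have h2 : s1 (Fin.castLE hkr c') ≠ part u := by
        rw [← h1]; exact fun h => hxy (s1.injective h).symm
      show s2 (s1 (Fin.castLE hkr c)) = part u
      rw [h1, hs2]
      exact Equiv.swap_apply_of_ne_of_ne (Ne.symm h2) hpuw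
    have hρc' : ρ c' = part w := by
      show s2 (s1 (Fin.castLE hkr c')) = part w
      rw [hs2]
      exact Equiv.swap_apply_left _ _
    set val : Fin k → V := fun d =>
      if d = c then u else if d = c' then w else zf u d (ρ d) with hval
    have hvalp : ∀ d, part (val d) = ρ d := by
      intro d
      by_cases h1 : d = c
      · subst h1; simp [hval, hρc]
      · by_cases h2 : d = c'
        · subst h2; simp [hval, h1, hρc']
        · simp [hval, h1, h2, hzp]
    set wf : Fin r → V := fun i =>
      if h : ∃ d, ρ d = i then val h.choose else (hne i).choose with hwfdef
    have hwf : ∀ i, part (wf i) = i := by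
      intro i
      by_cases h : ∃ d, ρ d = i
      · simp only [hwfdef, dif_pos h]
        rw [hvalp]; exact h.choose_spec
      · simp only [hwfdef, dif_neg h]
        exact (hne i).choose_spec
    have hkey : ∀ d, wf (ρ d) = val d := by
      intro d
      have h : ∃ d', ρ d' = ρ d := ⟨d, rfl⟩
      simp only [hwfdef, dif_pos h]
      congr 1
      exact hρinj h.choose_spec
    have he : IsPartiteEdge part (Finset.image wf Finset.univ) := mkEdge part wf hwf
    have hmem : ∀ d, val d ∈ Finset.image wf Finset.univ :=
      fun d => Finset.mem_image.mpr ⟨ρ d, Finset.mem_univ _, hkey d⟩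
    have humem : u ∈ Finset.image wf Finset.univ := by
      have := hmem c; simpa [hval] using this
    have hwmem : w ∈ Finset.image wf Finset.univ := by
      have := hmem c'
      simpa [hval, if_neg (Ne.symm hcc')] using this
    by_cases h1 : χ (Finset.image wf Finset.univ) = c
    · exact hnc (Relation.ReflTransGen.single ⟨_, he, h1, humem, hwmem⟩)
    · by_cases h2 : χ (Finset.image wf Finset.univ) = c'
      · exact hnc' (Relation.ReflTransGen.single ⟨_, he, h2, humem, hwmem⟩)
      · have hzmem : zf u (χ (Finset.image wf Finset.univ))
            (ρ (χ (Finset.image wf Finset.univ))) ∈ Finset.image wf Finset.univ := by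
          have := hmem (χ (Finset.image wf Finset.univ))
          simpa [hval, h1, h2] using this
        exact hznc u (χ (Finset.image wf Finset.univ)) _
          (Relation.ReflTransGen.single ⟨_, he, rfl, humem, hzmem⟩)
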